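/- Suppose G' and G are finite simple graphs on the same vertex set such that E(G') ⊆ E(G), and deg_G(v) ≤ 3·deg_{G'}(v) for every vertex v. Then for every nonempty vertex subset S, den_{G'}(S) ≤ den_G(S) ≤ den_{G'}(S) + (3/|S|)·Σ_{x∈S} deg_{G'}(x). -/
import Mathlib


open Finset

open scoped Classical in
/-- `E_G(S)`: edges of `G` with both endpoints in `S`. -/
noncomputable def edgesIn {V : Type*} [Fintype V] [DecidableEq V]
    (G : SimpleGraph V) [DecidableRel G.Adj] (S : Finset V) : Finset (Sym2 V) :=
  G.edgeFinset.filter (fun e => ∀ v ∈ e, v ∈ S)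

/-- `den_G(S) = |E_G(S)|/|S|`. -/
noncomputable def den {V : Type*} [Fintype V] [DecidableEq V]
    (G : SimpleGraph V) [DecidableRel G.Adj] (S : Finset V) : ℝ :=
  (edgesIn G S).card / S.card

theorem forgiving_graph_density_bounds {V : Type*} [Fintype V] [DecidableEq V]
    (G' G : SimpleGraph V) [DecidableRel G'.Adj] [DecidableRel G.Adj]
    (hsub : ∀ u v : V, G'.Adj u v → G.Adj u v)
    (hdeg : ∀ v : V, G.degree v ≤ 3 * G'.degree v)
    (S : Finset V) (hS : S.Nonempty) :
    den G' S ≤ den G S ∧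
      den G S ≤ den G' S + (3 / (S.card : ℝ)) * (∑ x ∈ S, (G'.degree x : ℝ)) := by
  classical
  have hSpos : (0 : ℝ) < S.card := by exact_mod_cast hS.card_pos
  have hsubE : edgesIn G' S ⊆ edgesIn G S := by
    intro e he
    simp only [edgesIn, mem_filter, SimpleGraph.mem_edgeFinset] at he ⊢
    refine ⟨?_, he.2⟩
    induction e using Sym2.ind with
    | _ a b => exact hsub a b he.1
  have hcard : (edgesIn G S).card ≤ ∑ x ∈ S, G.degree x := by
    calc (edgesIn G S).card
        ≤ (S.biUnion fun x => G.incidenceFinset x).card := by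
          apply card_le_card
          intro e he
          simp only [edgesIn, mem_filter, SimpleGraph.mem_edgeFinset] at he
          rw [mem_biUnion]
          induction e using Sym2.ind with
          | _ a b =>
            refine ⟨a, he.2 a (by simp), ?_⟩
            rw [SimpleGraph.mem_incidenceFinset]
            exact ⟨he.1, by simp⟩
      _ ≤ ∑ x ∈ S, (G.incidenceFinset x).card := card_biUnion_le
      _ = ∑ x ∈ S, G.degree x := by
          simp [SimpleGraph.card_incidenceFinset_eq_degree]
  constructor
  · unfold den
    apply div_le_div_of_nonneg_right ?_ hSpos.le |>.trans_eq rfl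
    exact_mod_cast card_le_card hsubE
  · have h1 : ((edgesIn G S).card : ℝ) ≤ 3 * ∑ x ∈ S, (G'.degree x : ℝ) := by
      calc ((edgesIn G S).card : ℝ) ≤ ∑ x ∈ S, (G.degree x : ℝ) := by
            exact_mod_cast hcard
        _ ≤ ∑ x ∈ S, 3 * (G'.degree x : ℝ) := by
            apply Finset.sum_le_sum
            intro x _
            exact_mod_cast hdeg x
        _ = 3 * ∑ x ∈ S, (G'.degree x : ℝ) := by rw [Finset.mul_sum]
    have hden0 : 0 ≤ den G' S := by
      unfold den; positivity
    calc den G S = ((edgesIn G S).card : ℝ) / S.card := rfl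
      _ ≤ (3 * ∑ x ∈ S, (G'.degree x : ℝ)) / S.card :=
          div_le_div_of_nonneg_right h1 hSpos.le |>.trans_eq rfl
      _ = (3 / (S.card : ℝ)) * (∑ x ∈ S, (G'.degree x : ℝ)) := by ring
      _ ≤ den G' S + (3 / (S.card : ℝ)) * (∑ x ∈ S, (G'.degree x : ℝ)) := by
          linarith
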